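/- arXiv:1809.06453 — 7 statements merged into one kernel-verified Lean document; each statement's English description precedes it below -/
import Mathlib

section
/- Let X be a nonempty complete metric space without isolated points. If a function f : X → ℝ is continuous at every point of a countable dense subset A of X, then there exists a point z ∈ X \ A at which f is continuous. -/
theorem stmt0 {X : Type*} [MetricSpace X] [CompleteSpace X] [Nonempty X]
    (hX : ∀ x : X, Filter.NeBot (nhdsWithin x {x}ᶜ))
    (A : Set X) (hA : A.Countable) (hAd : Dense A)
    (f : X → ℝ) (hf : ∀ a ∈ A, ContinuousAt f a) :
    ∃ z, z ∉ A ∧ ContinuousAt f z := by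
  have hC : {x | ContinuousAt f x} ∈ residual X :=
    residual_of_dense_Gδ (IsGδ.setOf_continuousAt f) (hAd.mono hf)
  have hAc : Aᶜ ∈ residual X := by
    have : (⋂ a ∈ A, ({a}ᶜ : Set X)) ∈ residual X := by
      refine (countable_bInter_mem hA).2 fun a ha => ?_
      have := hX a
      exact residual_of_dense_open isOpen_compl_singleton (dense_compl_singleton a)
    have heq : Aᶜ = ⋂ a ∈ A, ({a}ᶜ : Set X) := by
      ext x; simp only [Set.mem_compl_iff, Set.mem_iInter, Set.mem_singleton_iff]; exact ⟨fun h i hi hxi => h (hxi ▸ hi), fun h hx => h x hx rfl⟩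
    rwa [heq]
  have hmem : (Aᶜ ∩ {x | ContinuousAt f x}) ∈ residual X := Filter.inter_mem hAc hC
  obtain ⟨z, hz⟩ := (dense_of_mem_residual hmem).nonempty
  exact ⟨z, hz.1, hz.2⟩
end

section
/- Let X be a nonempty complete metric space without isolated points. If a function f : X → ℝ is continuous at every point of a countable dense subset of X, then the set of points of continuity of f is uncountable. -/
theorem stmt1 {X : Type*} [MetricSpace X] [CompleteSpace X] [Nonempty X]
    (hX : ∀ x : X, Filter.NeBot (nhdsWithin x {x}ᶜ))
    (A : Set X) (hA : A.Countable) (hAd : Dense A)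
    (f : X → ℝ) (hf : ∀ a ∈ A, ContinuousAt f a) :
    ¬ {x : X | ContinuousAt f x}.Countable := by
  intro hc
  set S := {x : X | ContinuousAt f x} with hS
  have hGδ : IsGδ S := IsGδ.setOf_continuousAt f
  have hdense : Dense S := hAd.mono (fun a ha => hf a ha)
  have hres : S ∈ residual X := residual_of_dense_Gδ hGδ hdense
  have hmeagre : IsMeagre S := by
    rw [isMeagre_iff_countable_union_isNowhereDense]
    refine ⟨(fun x => ({x} : Set X)) '' S, ?_, ?_, ?_⟩
    · rintro t ⟨x, _, rfl⟩
      haveI := hX x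
      rw [IsNowhereDense, closure_singleton]
      exact interior_singleton x
    · exact hc.image _
    · intro x hx
      exact Set.mem_sUnion.2 ⟨{x}, ⟨x, hx, rfl⟩, rfl⟩
  have : (∅ : Set X) ∈ residual X := by
    have := Filter.inter_mem hres hmeagre
    rwa [Set.inter_compl_self] at this
  have hd : Dense (∅ : Set X) := dense_of_mem_residual this
  simpa using hd.nonempty
end

section
/- There is no function f : ℝ → ℝ that is continuous at every rational number and discontinuous at every irrational number. -/
theorem stmt3 :
    ¬ ∃ f : ℝ → ℝ, ∀ x : ℝ, ContinuousAt f x ↔ ∃ q : ℚ, x = (q : ℝ) := by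
  rintro ⟨f, hf⟩
  have hGδ : IsGδ {x : ℝ | ContinuousAt f x} := IsGδ.setOf_continuousAt f
  have heq : {x : ℝ | ContinuousAt f x} = Set.range ((↑) : ℚ → ℝ) := by
    ext x; simp [hf x, eq_comm, Set.mem_range]
  have hdense : Dense {x : ℝ | ContinuousAt f x} := by
    rw [heq]; exact Rat.denseRange_cast
  have h1 : ∀ᶠ x in residual ℝ, ContinuousAt f x :=
    residual_of_dense_Gδ hGδ hdense
  have h2 : ∀ᶠ x in residual ℝ, Irrational x := eventually_residual_irrational
  obtain ⟨x, hx1, hx2⟩ := (dense_of_mem_residual (h1.and h2)).nonempty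
  obtain ⟨q, rfl⟩ := (hf x).1 hx1
  exact hx2 ⟨q, rfl⟩
end

section
/- Let X be a nonempty complete metric space without isolated points, and let f, g : X → ℝ be functions such that C(f) and C(g) are both dense in X. Then C(f) ∩ C(g) is uncountable. -/
theorem stmt6 {X : Type*} [MetricSpace X] [CompleteSpace X] [Nonempty X]
    (hX : ∀ x : X, Filter.NeBot (nhdsWithin x {x}ᶜ))
    (f g : X → ℝ)
    (hf : Dense {x : X | ContinuousAt f x}) (hg : Dense {x : X | ContinuousAt g x}) :
    ¬ ({x : X | ContinuousAt f x} ∩ {x : X | ContinuousAt g x}).Countable := by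
  intro hcount
  set S := {x : X | ContinuousAt f x} ∩ {x : X | ContinuousAt g x} with hS
  -- S is residual
  have hres : S ∈ residual X := by
    exact Filter.inter_mem
      (residual_of_dense_Gδ (IsGδ.setOf_continuousAt f) hf)
      (residual_of_dense_Gδ (IsGδ.setOf_continuousAt g) hg)
  -- S is meagre since it is countable and singletons are nowhere dense
  have hmeagre : IsMeagre S := by
    rw [isMeagre_iff_countable_union_isNowhereDense]
    refine ⟨(fun x => ({x} : Set X)) '' S, ?_, hcount.image _, ?_⟩
    · rintro t ⟨x, -, rfl⟩
      show interior (closure {x}) = ∅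
      rw [closure_singleton, Set.eq_empty_iff_forall_notMem]
      intro y hy
      have hyx : y ∈ ({x} : Set X) := interior_subset hy
      rw [Set.mem_singleton_iff] at hyx
      subst hyx
      have h1 : ({y}ᶜ : Set X) ∈ nhdsWithin y {y}ᶜ := self_mem_nhdsWithin
      have h2 : ({y} : Set X) ∈ nhdsWithin y {y}ᶜ :=
        mem_nhdsWithin_of_mem_nhds (mem_interior_iff_mem_nhds.mp hy)
      have h3 := Filter.inter_mem h1 h2
      rw [Set.compl_inter_self] at h3
      exact (hX y).ne (Filter.empty_mem_iff_bot.mp h3)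
    · intro x hx
      exact ⟨{x}, ⟨x, hx, rfl⟩, rfl⟩
  -- contradiction: S and Sᶜ both residual ⇒ ∅ residual ⇒ ∅ dense
  have hempty : (∅ : Set X) ∈ residual X := by
    have := Filter.inter_mem hres hmeagre
    rwa [Set.inter_compl_self] at this
  have := dense_of_mem_residual hempty
  rcases ‹Nonempty X› with ⟨x⟩
  simpa using this.exists_mem_open isOpen_univ ⟨x, trivial⟩
end

section
/- Let X be a nonempty complete metric space without isolated points and let A ⊆ X be any countable subset. Then there exists a function g : X → ℝ whose set of discontinuity points is exactly A. -/
lemma half_pow_aux (m n : ℕ) (h : m ≠ n) :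
    (1/2:ℝ)^(n+1) ≤ |(1/2:ℝ)^m - (1/2:ℝ)^n| := by
  have h0 : (0:ℝ) ≤ 1/2 := by norm_num
  have h1 : (1/2:ℝ) ≤ 1 := by norm_num
  rcases lt_or_gt_of_ne h with hlt | hgt
  · have hm1 : (1/2:ℝ)^n ≤ (1/2:ℝ)^(m+1) := pow_le_pow_of_le_one h0 h1 hlt
    have hmn1 : (1/2:ℝ)^(n+1) ≤ (1/2:ℝ)^(m+1) :=
      pow_le_pow_of_le_one h0 h1 (by omega)
    have habs : |(1/2:ℝ)^m - (1/2:ℝ)^n| = (1/2:ℝ)^m - (1/2:ℝ)^n := by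
      apply abs_of_nonneg
      have := pow_le_pow_of_le_one h0 h1 hlt.le
      linarith
    rw [habs, pow_succ] at *
    nlinarith [pow_pos (by norm_num : (0:ℝ) < 1/2) m]
  · have hm1 : (1/2:ℝ)^m ≤ (1/2:ℝ)^(n+1) := pow_le_pow_of_le_one h0 h1 hgt
    have habs : |(1/2:ℝ)^m - (1/2:ℝ)^n| = (1/2:ℝ)^n - (1/2:ℝ)^m := by
      rw [abs_sub_comm]
      apply abs_of_nonneg
      have := pow_le_pow_of_le_one h0 h1 hgt.le
      linarith
    rw [habs, pow_succ] at *
    nlinarith [pow_pos (by norm_num : (0:ℝ) < 1/2) n]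

theorem stmt11 {X : Type*} [MetricSpace X] [CompleteSpace X] [Nonempty X]
    (hX : ∀ x : X, Filter.NeBot (nhdsWithin x {x}ᶜ))
    (A : Set X) (hA : A.Countable) :
    ∃ g : X → ℝ, {x : X | ¬ ContinuousAt g x} = A := by
  classical
  obtain ⟨f, hf⟩ := Set.countable_iff_exists_injective.mp hA
  set g : X → ℝ := fun x => if h : x ∈ A then (1/2 : ℝ) ^ (f ⟨x, h⟩) else 0 with hgdef
  have hgpos : ∀ (x : X) (h : x ∈ A), g x = (1/2:ℝ)^(f ⟨x,h⟩) := fun x h => dif_pos h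
  have hg0 : ∀ x ∉ A, g x = 0 := fun x h => dif_neg h
  have key : ∀ (a : X) (ha : a ∈ A) (x : X), x ≠ a →
      (1/2:ℝ)^(f ⟨a,ha⟩ + 1) ≤ |g x - g a| := by
    intro a ha x hx
    rw [hgpos a ha]
    by_cases hxA : x ∈ A
    · rw [hgpos x hxA]
      refine half_pow_aux _ _ fun h => hx ?_
      have := hf h
      exact congrArg Subtype.val this
    · rw [hg0 x hxA, zero_sub, abs_neg, abs_of_nonneg (by positivity)]
      exact pow_le_pow_of_le_one (by norm_num) (by norm_num) (by omega)
  have cont : ∀ x ∉ A, ContinuousAt g x := by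
    intro x hx
    have hgx : g x = 0 := hg0 x hx
    rw [ContinuousAt, hgx, Metric.tendsto_nhds]
    intro ε hε
    obtain ⟨N, hN⟩ := exists_pow_lt_of_lt_one hε (by norm_num : (1/2:ℝ) < 1)
    set S : Set X := Subtype.val '' (f ⁻¹' (Set.Iio N)) with hS
    have hSfin : S.Finite := ((Set.finite_Iio N).preimage hf.injOn).image _
    have hxS : x ∉ S := by
      rintro ⟨a, _, rfl⟩
      exact hx a.2
    have hopen : IsOpen Sᶜ := hSfin.isClosed.isOpen_compl
    filter_upwards [hopen.mem_nhds hxS] with y hy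
    rw [Real.dist_eq, sub_zero]
    by_cases hyA : y ∈ A
    · rw [hgpos y hyA, abs_of_nonneg (by positivity)]
      have hNle : N ≤ f ⟨y, hyA⟩ := by
        by_contra hcon
        push_neg at hcon
        exact hy ⟨⟨y, hyA⟩, hcon, rfl⟩
      calc (1/2:ℝ)^(f ⟨y,hyA⟩) ≤ (1/2:ℝ)^N :=
            pow_le_pow_of_le_one (by norm_num) (by norm_num) hNle
        _ < ε := hN
    · rw [hg0 y hyA, abs_zero]; exact hε
  have disc : ∀ a ∈ A, ¬ ContinuousAt g a := by
    intro a ha hc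
    haveI := hX a
    have h2 : ∀ᶠ x in nhdsWithin a {a}ᶜ, dist (g x) (g a) < (1/2:ℝ)^(f ⟨a,ha⟩ + 1) :=
      Metric.tendsto_nhds.mp (hc.tendsto.mono_left (nhdsWithin_le_nhds (s := {a}ᶜ)))
        ((1/2:ℝ)^(f ⟨a,ha⟩ + 1)) (by positivity)
    obtain ⟨x, hxd, hxne⟩ := (h2.and eventually_mem_nhdsWithin).exists
    have := key a ha x hxne
    rw [Real.dist_eq] at hxd
    linarith
  refine ⟨g, ?_⟩
  ext x
  simp only [Set.mem_setOf_eq]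
  constructor
  · intro h
    by_contra hx
    exact h (cont x hx)
  · exact disc x
end

section
/- Let X be a nonempty metric space without isolated points and A a countable subset with dense complement, enumerated injectively as q_1, q_2, …. Let D be a dense subset of X with dense complement. Define g : X → ℝ by g(x) = 1 for x ∉ A, g(q_n) = 1 + 1/2^n if q_n ∈ D, and g(q_n) = 1 − 1/2^n if q_n ∉ D. Then g is discontinuous exactly on A. -/
theorem stmt17 {X : Type*} [MetricSpace X] [Nonempty X]
    (hX : ∀ x : X, Filter.NeBot (nhdsWithin x {x}ᶜ))
    (q : ℕ → X) (hq : Function.Injective q)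
    (hdense : Dense (Set.range q)ᶜ)
    (D : Set X) (hD : Dense D) (hDc : Dense Dᶜ)
    (g : X → ℝ)
    (hg1 : ∀ n : ℕ, q n ∈ D → g (q n) = 1 + 1 / 2 ^ n)
    (hg2 : ∀ n : ℕ, q n ∉ D → g (q n) = 1 - 1 / 2 ^ n)
    (hg3 : ∀ x ∉ Set.range q, g x = 1) :
    {x : X | ¬ ContinuousAt g x} = Set.range q := by
  have hgdist : ∀ n : ℕ, dist (g (q n)) 1 = (1/2 : ℝ) ^ n := by
    intro n
    by_cases h : q n ∈ D
    · rw [hg1 n h, Real.dist_eq, div_pow, one_pow,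
        show (1:ℝ) + 1/2^n - 1 = 1/2^n by ring]
      exact abs_of_nonneg (by positivity)
    · rw [hg2 n h, Real.dist_eq, div_pow, one_pow,
        show (1:ℝ) - 1/2^n - 1 = -(1/2^n) by ring, abs_neg]
      exact abs_of_nonneg (by positivity)
  ext x
  simp only [Set.mem_setOf_eq]
  constructor
  · intro hx
    by_contra hxr
    apply hx
    have hgx : g x = 1 := hg3 x hxr
    rw [ContinuousAt, hgx, Metric.tendsto_nhds]
    intro ε hε
    have h0 : Filter.Tendsto (fun n : ℕ => (1/2 : ℝ) ^ n) Filter.atTop (nhds 0) :=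
      tendsto_pow_atTop_nhds_zero_of_lt_one (by norm_num) (by norm_num)
    obtain ⟨N, hN⟩ := (h0.eventually (eventually_lt_nhds hε)).exists_forall_of_atTop
    have hTfin : (q '' Set.Iio N).Finite := (Set.finite_Iio N).image q
    have hxT : x ∉ q '' Set.Iio N := fun ⟨n, _, hn⟩ => hxr ⟨n, hn⟩
    have hmem : (q '' Set.Iio N)ᶜ ∈ nhds x :=
      hTfin.isClosed.isOpen_compl.mem_nhds hxT
    filter_upwards [hmem] with y hy
    rcases Classical.em (y ∈ Set.range q) with ⟨n, rfl⟩ | hyr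
    · have hnN : N ≤ n := by
        by_contra h
        exact hy ⟨n, Set.mem_Iio.mpr (by omega), rfl⟩
      rw [hgdist n]
      exact hN n hnN
    · rw [hg3 y hyr]
      simpa using hε
  · rintro ⟨n, rfl⟩ hc
    have hnb : Filter.NeBot (nhdsWithin (q n) (Set.range q)ᶜ) :=
      mem_closure_iff_nhdsWithin_neBot.mp (hdense (q n))
    have h1 : Filter.Tendsto g (nhdsWithin (q n) (Set.range q)ᶜ) (nhds 1) := by
      apply Filter.Tendsto.congr' _ tendsto_const_nhds
      filter_upwards [self_mem_nhdsWithin] with y hy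
      exact (hg3 y hy).symm
    have h2 : Filter.Tendsto g (nhdsWithin (q n) (Set.range q)ᶜ) (nhds (g (q n))) :=
      hc.mono_left nhdsWithin_le_nhds
    have := tendsto_nhds_unique h1 h2
    have hd := hgdist n
    rw [← this, dist_self] at hd
    have : (0:ℝ) < (1/2)^n := by positivity
    linarith
end

section
/- Every nonempty metric space without isolated points has a dense subset whose complement is also dense. -/
open Metric Filter Set

namespace Stmt18Aux

variable {X : Type*} [MetricSpace X]

noncomputable def eps (n : ℕ) : ℝ := 1 / (n + 1)

lemma eps_pos (n : ℕ) : 0 < eps n := by unfold eps; positivity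

lemma exists_maximal_sep [Nonempty X] {r : ℝ} (hr : 0 < r) :
    ∃ A : Set X, (∀ a ∈ A, ∀ b ∈ A, a ≠ b → r ≤ dist a b) ∧
      ∀ x : X, ∃ a ∈ A, dist x a < r := by
  have hZ : ∀ c ⊆ {A : Set X | A.Pairwise fun a b => r ≤ dist a b},
      IsChain (· ⊆ ·) c → ∃ ub ∈ {A : Set X | A.Pairwise fun a b => r ≤ dist a b},
        ∀ s ∈ c, s ⊆ ub := by
    intro c hc hchain
    refine ⟨⋃₀ c, ?_, fun s hs => subset_sUnion_of_mem hs⟩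
    intro a ha b hb hab
    obtain ⟨s, hs, has⟩ := ha
    obtain ⟨t, ht, hbt⟩ := hb
    rcases hchain.total hs ht with hst | hts
    · exact (hc ht) (hst has) hbt hab
    · exact (hc hs) has (hts hbt) hab
  obtain ⟨M, hM⟩ := zorn_subset {A : Set X | A.Pairwise fun a b => r ≤ dist a b} hZ
  refine ⟨M, fun a ha b hb hab => hM.prop ha hb hab, fun x => ?_⟩
  by_contra h
  push_neg at h
  have hx : x ∉ M := fun hxM => absurd (h x hxM) (by simp [dist_self]; exact hr)
  have hins : insert x M ∈ {A : Set X | A.Pairwise fun a b => r ≤ dist a b} := by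
    refine Set.Pairwise.insert hM.prop ?_
    intro b hb hxb
    exact ⟨h b hb, by rw [dist_comm]; exact h b hb⟩
  have := hM.eq_of_subset hins (subset_insert x M)
  exact hx (this ▸ mem_insert x M)


def C (S : Set X) (r : ℝ) (a : X) : Prop :=
  ∃ pq : X × X, pq.1 ≠ pq.2 ∧ pq.1 ∈ ball a r \ S ∧ pq.2 ∈ ball a r \ S

open Classical in
noncomputable def pair (S : Set X) (r : ℝ) (a : X) : X × X :=
  if h : C S r a then h.choose else (a, a)

lemma pair_spec {S : Set X} {r : ℝ} {a : X} (h : C S r a) :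
    (pair S r a).1 ≠ (pair S r a).2 ∧ (pair S r a).1 ∈ ball a r \ S ∧
      (pair S r a).2 ∈ ball a r \ S := by
  rw [pair, dif_pos h]; exact h.choose_spec

def newD (A : Set X) (S : Set X) (r : ℝ) : Set X :=
  {y | ∃ a ∈ A, C S r a ∧ y = (pair S r a).1}

def newE (A : Set X) (S : Set X) (r : ℝ) : Set X :=
  {y | ∃ a ∈ A, C S r a ∧ y = (pair S r a).2}

noncomputable def acc (A : ℕ → Set X) : ℕ → Set X × Set X
  | 0 => (newD (A 0) ∅ (eps 0 / 3), newE (A 0) ∅ (eps 0 / 3))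
  | n + 1 =>
      ((acc A n).1 ∪ newD (A (n+1)) ((acc A n).1 ∪ (acc A n).2) (eps (n+1) / 3),
       (acc A n).2 ∪ newE (A (n+1)) ((acc A n).1 ∪ (acc A n).2) (eps (n+1) / 3))

noncomputable def forb (A : ℕ → Set X) : ℕ → Set X
  | 0 => ∅
  | n + 1 => (acc A n).1 ∪ (acc A n).2

lemma newD_subset_acc (A : ℕ → Set X) (n : ℕ) :
    newD (A n) (forb A n) (eps n / 3) ⊆ (acc A n).1 := by
  cases n with
  | zero => exact subset_rfl
  | succ n => exact subset_union_right

lemma newE_subset_acc (A : ℕ → Set X) (n : ℕ) :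
    newE (A n) (forb A n) (eps n / 3) ⊆ (acc A n).2 := by
  cases n with
  | zero => exact subset_rfl
  | succ n => exact subset_union_right

lemma acc_succ_fst (A : ℕ → Set X) (n : ℕ) :
    (acc A (n+1)).1 = (acc A n).1 ∪ newD (A (n+1)) (forb A (n+1)) (eps (n+1) / 3) := rfl

lemma acc_succ_snd (A : ℕ → Set X) (n : ℕ) :
    (acc A (n+1)).2 = (acc A n).2 ∪ newE (A (n+1)) (forb A (n+1)) (eps (n+1) / 3) := rfl

/-- In a stage built from an `ε`-separated set, any small ball meets the chosen
points in at most two points. -/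
lemma ball_sep {a a₀ w y x : X} {ε : ℝ} (hε : 0 < ε) (hsep : ε ≤ dist a a₀)
    (hy : y ∈ ball a (ε/3)) (hw : w ∈ ball a₀ (ε/3))
    (hyx : dist y x < ε/8) (hwx : dist w x < ε/8) : False := by
  have h1 := dist_triangle4 a y w a₀
  have h2 := dist_triangle y x w
  have h3 : dist y a < ε/3 := mem_ball.1 hy
  have h4 : dist w a₀ < ε/3 := mem_ball.1 hw
  have e1 : dist a y = dist y a := dist_comm a y
  have e2 : dist x w = dist w x := dist_comm x w
  linarith

/-- In a stage built from an `ε`-separated set, any small ball meets the chosen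
points in at most two points. -/
lemma stage_locfin {A : Set X} {ε : ℝ} (hε : 0 < ε)
    (hA : ∀ a ∈ A, ∀ b ∈ A, a ≠ b → ε ≤ dist a b) (S : Set X) (x : X) :
    ∃ p q : X, ∀ y ∈ newD A S (ε/3) ∪ newE A S (ε/3), dist y x < ε/8 → y = p ∨ y = q := by
  by_cases hex : ∃ a ∈ A, C S (ε/3) a ∧
      (dist (pair S (ε/3) a).1 x < ε/8 ∨ dist (pair S (ε/3) a).2 x < ε/8)
  · obtain ⟨a₀, ha₀, hC₀, hw⟩ := hex
    refine ⟨(pair S (ε/3) a₀).1, (pair S (ε/3) a₀).2, ?_⟩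
    have hkey : ∀ a ∈ A, a ≠ a₀ → ∀ y : X, y ∈ ball a (ε/3) → dist y x < ε/8 → False := by
      intro a ha haa y hy hyx
      obtain ⟨w, hw1, hw2⟩ : ∃ w, w ∈ ball a₀ (ε/3) ∧ dist w x < ε/8 := by
        rcases hw with h | h
        · exact ⟨_, (pair_spec hC₀).2.1.1, h⟩
        · exact ⟨_, (pair_spec hC₀).2.2.1, h⟩
      exact ball_sep hε (hA a ha a₀ ha₀ haa) hy hw1 hyx hw2
    rintro y (⟨a, ha, hC, rfl⟩ | ⟨a, ha, hC, rfl⟩) hyx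
    · by_cases haa : a = a₀
      · subst haa; simp
      · exact absurd (hkey a ha haa _ (pair_spec hC).2.1.1 hyx) not_false
    · by_cases haa : a = a₀
      · subst haa; simp
      · exact absurd (hkey a ha haa _ (pair_spec hC).2.2.1 hyx) not_false
  · refine ⟨x, x, fun y hy hyx => ?_⟩
    exfalso
    apply hex
    rcases hy with ⟨a, ha, hC, rfl⟩ | ⟨a, ha, hC, rfl⟩
    · exact ⟨a, ha, hC, Or.inl hyx⟩
    · exact ⟨a, ha, hC, Or.inr hyx⟩

variable {A : ℕ → Set X}

lemma acc_locfin (hA1 : ∀ n, ∀ a ∈ A n, ∀ b ∈ A n, a ≠ b → eps n ≤ dist a b) :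
    ∀ n : ℕ, ∀ x : X, ∃ δ : ℝ, 0 < δ ∧ ∃ F : Set X, F.Finite ∧
      ∀ y ∈ (acc A n).1 ∪ (acc A n).2, dist y x < δ → y ∈ F := by
  intro n
  induction n with
  | zero =>
    intro x
    obtain ⟨p, q, hpq⟩ := stage_locfin (eps_pos 0) (hA1 0) (∅ : Set X) x
    refine ⟨eps 0 / 8, by have := eps_pos 0; linarith, {p, q},
      (finite_singleton q).insert p, ?_⟩
    intro y hy hyd
    exact hpq y hy hyd
  | succ n ih =>
    intro x
    obtain ⟨δ₁, hδ₁, F₁, hF₁, hmem₁⟩ := ih x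
    obtain ⟨p, q, hpq⟩ := stage_locfin (eps_pos (n+1)) (hA1 (n+1)) (forb A (n+1)) x
    refine ⟨min δ₁ (eps (n+1) / 8), lt_min hδ₁ (by have := eps_pos (n+1); linarith),
      insert p (insert q F₁), (hF₁.insert q).insert p, ?_⟩
    intro y hy hyd
    have hyd₁ : dist y x < δ₁ := lt_of_lt_of_le hyd (min_le_left _ _)
    have hyd₂ : dist y x < eps (n+1) / 8 := lt_of_lt_of_le hyd (min_le_right _ _)
    rcases hy with hy | hy
    · rw [acc_succ_fst] at hy
      rcases hy with hy | hy
      · exact Or.inr (Or.inr (hmem₁ y (Or.inl hy) hyd₁))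
      · rcases hpq y (Or.inl hy) hyd₂ with h | h
        · exact Or.inl h
        · exact Or.inr (Or.inl h)
    · rw [acc_succ_snd] at hy
      rcases hy with hy | hy
      · exact Or.inr (Or.inr (hmem₁ y (Or.inr hy) hyd₁))
      · rcases hpq y (Or.inr hy) hyd₂ with h | h
        · exact Or.inl h
        · exact Or.inr (Or.inl h)

lemma avoid (hX : ∀ x : X, Filter.NeBot (nhdsWithin x {x}ᶜ))
    (hA1 : ∀ n, ∀ a ∈ A n, ∀ b ∈ A n, a ≠ b → eps n ≤ dist a b) :
    ∀ (n : ℕ) (x : X) (r : ℝ), 0 < r → ∃ y ρ, 0 < ρ ∧ ball y ρ ⊆ ball x r ∧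
      ∀ z ∈ ball y ρ, z ∉ forb A n := by
  intro n x r hr
  cases n with
  | zero => exact ⟨x, r, hr, subset_rfl, by simp [forb]⟩
  | succ n =>
    obtain ⟨δ, hδ, F, hF, hmem⟩ := acc_locfin hA1 n x
    set r' := min r δ with hr'
    have hr'pos : 0 < r' := lt_min hr hδ
    haveI := hX x
    have hinf : (ball x r').Infinite := infinite_of_mem_nhds x (ball_mem_nhds x hr'pos)
    have hUopen : IsOpen (ball x r' \ F) := isOpen_ball.sdiff hF.isClosed
    obtain ⟨y, hy⟩ := (hinf.diff hF).nonempty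
    obtain ⟨ρ, hρ, hball⟩ := Metric.isOpen_iff.1 hUopen y hy
    refine ⟨y, ρ, hρ, ?_, ?_⟩
    · exact hball.trans ((diff_subset).trans (ball_subset_ball (min_le_left _ _)))
    · intro z hz hzf
      have hzU := hball hz
      have hzb : z ∈ ball x r' := hzU.1
      have : dist z x < δ := lt_of_lt_of_le (mem_ball.1 hzb) (min_le_right _ _)
      exact hzU.2 (hmem z hzf this)

lemma Cgood (hX : ∀ x : X, Filter.NeBot (nhdsWithin x {x}ᶜ))
    (hA1 : ∀ n, ∀ a ∈ A n, ∀ b ∈ A n, a ≠ b → eps n ≤ dist a b)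
    (n : ℕ) (a : X) : C (forb A n) (eps n / 3) a := by
  obtain ⟨y, ρ, hρ, hsub, hav⟩ := avoid hX hA1 n a (eps n / 3) (by have := eps_pos n; linarith)
  haveI := hX y
  have hne : (ball y ρ ∩ {y}ᶜ).Nonempty :=
    Filter.nonempty_of_mem (Filter.inter_mem
      (mem_nhdsWithin_of_mem_nhds (ball_mem_nhds y hρ)) self_mem_nhdsWithin)
  obtain ⟨z, hz, hzy⟩ := hne
  refine ⟨(y, z), fun h => hzy (by simpa using h.symm), ⟨hsub (mem_ball_self hρ), hav y (mem_ball_self hρ)⟩,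
    ⟨hsub hz, hav z hz⟩⟩

lemma stage_disj {A' S : Set X} {ε : ℝ} (hε : 0 < ε)
    (hA : ∀ a ∈ A', ∀ b ∈ A', a ≠ b → ε ≤ dist a b)
    {y : X} (h1 : y ∈ newD A' S (ε/3)) (h2 : y ∈ newE A' S (ε/3)) : False := by
  obtain ⟨a, ha, hCa, hy1⟩ := h1
  obtain ⟨b, hb, hCb, hy2⟩ := h2
  by_cases hab : a = b
  · subst hab
    exact (pair_spec hCa).1 (hy1 ▸ hy2 ▸ rfl)
  · have hsep := hA a ha b hb hab
    have d1 : dist y a < ε/3 := mem_ball.1 (hy1 ▸ (pair_spec hCa).2.1.1)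
    have d2 : dist y b < ε/3 := mem_ball.1 (hy2 ▸ (pair_spec hCb).2.2.1)
    have := dist_triangle a y b
    have e1 : dist a y = dist y a := dist_comm a y
    linarith

lemma acc_disj (hA1 : ∀ n, ∀ a ∈ A n, ∀ b ∈ A n, a ≠ b → eps n ≤ dist a b) :
    ∀ n : ℕ, ∀ y : X, y ∈ (acc A n).1 → y ∈ (acc A n).2 → False := by
  intro n
  induction n with
  | zero =>
    intro y h1 h2
    exact stage_disj (eps_pos 0) (hA1 0) h1 h2
  | succ n ih =>
    intro y h1 h2
    rw [acc_succ_fst] at h1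
    rw [acc_succ_snd] at h2
    rcases h1 with h1 | h1 <;> rcases h2 with h2 | h2
    · exact ih y h1 h2
    · obtain ⟨b, hb, hCb, hy⟩ := h2
      exact (pair_spec hCb).2.2.2 (hy ▸ Or.inl h1)
    · obtain ⟨b, hb, hCb, hy⟩ := h1
      exact (pair_spec hCb).2.1.2 (hy ▸ Or.inr h2)
    · exact stage_disj (eps_pos (n+1)) (hA1 (n+1)) h1 h2

lemma accD_mono : Monotone fun n => (acc A n).1 :=
  monotone_nat_of_le_succ fun n => by rw [acc_succ_fst]; exact subset_union_left

lemma accE_mono : Monotone fun n => (acc A n).2 :=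
  monotone_nat_of_le_succ fun n => by rw [acc_succ_snd]; exact subset_union_left

end Stmt18Aux

theorem stmt18 {X : Type*} [MetricSpace X] [Nonempty X]
    (hX : ∀ x : X, Filter.NeBot (nhdsWithin x {x}ᶜ)) :
    ∃ D : Set X, Dense D ∧ Dense Dᶜ := by
  classical
  choose A hA1 hA2 using fun n : ℕ => Stmt18Aux.exists_maximal_sep (X := X) (Stmt18Aux.eps_pos n)
  set D : Set X := ⋃ n, (Stmt18Aux.acc A n).1 with hD
  set E : Set X := ⋃ n, (Stmt18Aux.acc A n).2 with hEdef
  have key : ∀ (x : X) (r : ℝ), 0 < r →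
      (∃ p ∈ (Metric.ball x r), p ∈ D) ∧ (∃ q ∈ (Metric.ball x r), q ∈ E) := by
    intro x r hr
    obtain ⟨n, hn⟩ := exists_nat_one_div_lt (by linarith : (0:ℝ) < r/2)
    have hne : Stmt18Aux.eps n < r / 2 := by
      have : Stmt18Aux.eps n = 1 / (n + 1) := rfl
      rw [this]; exact_mod_cast hn
    obtain ⟨a, ha, hxa⟩ := hA2 n x
    have hC := Stmt18Aux.Cgood (A := A) hX hA1 n a
    have hεpos := Stmt18Aux.eps_pos n
    constructor
    · refine ⟨(Stmt18Aux.pair (Stmt18Aux.forb A n) (Stmt18Aux.eps n / 3) a).1, ?_, ?_⟩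
      · have h1 : dist (Stmt18Aux.pair (Stmt18Aux.forb A n) (Stmt18Aux.eps n / 3) a).1 a
            < Stmt18Aux.eps n / 3 := Metric.mem_ball.1 (Stmt18Aux.pair_spec hC).2.1.1
        have h2 := dist_triangle
          (Stmt18Aux.pair (Stmt18Aux.forb A n) (Stmt18Aux.eps n / 3) a).1 a x
        have e : dist a x = dist x a := dist_comm a x
        exact Metric.mem_ball.2 (by linarith)
      · exact mem_iUnion.2 ⟨n, Stmt18Aux.newD_subset_acc A n ⟨a, ha, hC, rfl⟩⟩
    · refine ⟨(Stmt18Aux.pair (Stmt18Aux.forb A n) (Stmt18Aux.eps n / 3) a).2, ?_, ?_⟩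
      · have h1 : dist (Stmt18Aux.pair (Stmt18Aux.forb A n) (Stmt18Aux.eps n / 3) a).2 a
            < Stmt18Aux.eps n / 3 := Metric.mem_ball.1 (Stmt18Aux.pair_spec hC).2.2.1
        have h2 := dist_triangle
          (Stmt18Aux.pair (Stmt18Aux.forb A n) (Stmt18Aux.eps n / 3) a).2 a x
        have e : dist a x = dist x a := dist_comm a x
        exact Metric.mem_ball.2 (by linarith)
      · exact mem_iUnion.2 ⟨n, Stmt18Aux.newE_subset_acc A n ⟨a, ha, hC, rfl⟩⟩
  have hEsub : E ⊆ Dᶜ := by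
    intro y hy hyD
    obtain ⟨n, hn⟩ := mem_iUnion.1 hy
    obtain ⟨m, hm⟩ := mem_iUnion.1 hyD
    exact Stmt18Aux.acc_disj hA1 (max n m) y
      (Stmt18Aux.accD_mono (le_max_right n m) hm)
      (Stmt18Aux.accE_mono (le_max_left n m) hn)
  refine ⟨D, ?_, ?_⟩
  · rw [Metric.dense_iff]
    intro x r hr
    obtain ⟨p, hp1, hp2⟩ := (key x r hr).1
    exact ⟨p, hp1, hp2⟩
  · have hEdense : Dense E := by
      rw [Metric.dense_iff]
      intro x r hr
      obtain ⟨q, hq1, hq2⟩ := (key x r hr).2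
      exact ⟨q, hq1, hq2⟩
    exact hEdense.mono hEsub
end
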